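/- Let X be a symmetric n×n matrix of variables over a field of characteristic 0, with det(X) a polynomial in the variables x_{ij} (i ≤ j). For any i < j, the differential operator ∂²/∂x_{ij}² + 2·∂²/(∂x_{ii}∂x_{jj}) annihilates det(X). -/
import Mathlib
open MvPolynomial Finsupp

noncomputable def mexp {n : ℕ} (σ : Equiv.Perm (Fin n)) : Sym2 (Fin n) →₀ ℕ :=
  ∑ a : Fin n, Finsupp.single s(σ a, a) 1

noncomputable def mtail {n : ℕ} (σ : Equiv.Perm (Fin n)) (i j : Fin n) : Sym2 (Fin n) →₀ ℕ :=
  ∑ a ∈ (Finset.univ.erase j).erase i, Finsupp.single s(σ a, a) 1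

lemma mexp_apply_diag {n : ℕ} (σ : Equiv.Perm (Fin n)) (i : Fin n) :
    mexp σ s(i, i) = if σ i = i then 1 else 0 := by
  classical
  rw [mexp, Finset.sum_apply']
  have h : ∀ a : Fin n, (Finsupp.single s(σ a, a) (1 : ℕ)) s(i, i)
      = if a = i then (if σ i = i then 1 else 0) else 0 := by
    intro a
    rcases eq_or_ne a i with rfl | h
    · simp [Finsupp.single_apply, Sym2.eq_iff]
    · simp [Finsupp.single_apply, Sym2.eq_iff, h]
  rw [Finset.sum_congr rfl fun a _ => h a, Finset.sum_ite_eq' Finset.univ i,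
    if_pos (Finset.mem_univ i)]

lemma mexp_apply_offdiag {n : ℕ} (σ : Equiv.Perm (Fin n)) {i j : Fin n} (hij : i ≠ j) :
    mexp σ s(i, j) = (if σ i = j then 1 else 0) + (if σ j = i then 1 else 0) := by
  classical
  rw [mexp, Finset.sum_apply']
  have h : ∀ a : Fin n, (Finsupp.single s(σ a, a) (1 : ℕ)) s(i, j)
      = (if a = i then (if σ i = j then 1 else 0) else 0)
        + (if a = j then (if σ j = i then 1 else 0) else 0) := by
    intro a
    rcases eq_or_ne a i with rfl | hai
    · simp [Finsupp.single_apply, Sym2.eq_iff, hij, hij.symm]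
    · rcases eq_or_ne a j with rfl | haj
      · simp [Finsupp.single_apply, Sym2.eq_iff, hij, hij.symm]
      · simp [Finsupp.single_apply, Sym2.eq_iff, hai, haj]
  rw [Finset.sum_congr rfl fun a _ => h a, Finset.sum_add_distrib,
    Finset.sum_ite_eq' Finset.univ i, Finset.sum_ite_eq' Finset.univ j,
    if_pos (Finset.mem_univ i), if_pos (Finset.mem_univ j)]

lemma mexp_decomp {n : ℕ} (σ : Equiv.Perm (Fin n)) {i j : Fin n} (hij : i ≠ j) :
    mexp σ = mtail σ i j + Finsupp.single s(σ i, i) 1 + Finsupp.single s(σ j, j) 1 := by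
  classical
  rw [mexp, ← Finset.sum_erase_add _ _ (Finset.mem_univ j),
    ← Finset.sum_erase_add _ _ (Finset.mem_erase.mpr ⟨hij, Finset.mem_univ i⟩)]
  rfl

lemma mtail_mul_swap {n : ℕ} (σ : Equiv.Perm (Fin n)) (i j : Fin n) :
    mtail (σ * Equiv.swap i j) i j = mtail σ i j := by
  refine Finset.sum_congr rfl fun a ha => ?_
  rw [Finset.mem_erase, Finset.mem_erase] at ha
  rw [Equiv.Perm.mul_apply, Equiv.swap_apply_of_ne_of_ne ha.1 ha.2.1]

lemma Lmon {K : Type*} [Field K] {n : ℕ} {i j : Fin n} (hij : i ≠ j)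
    (m : Sym2 (Fin n) →₀ ℕ) (c : K) :
    pderiv s(i, j) (pderiv s(i, j) (monomial m c))
      + 2 * pderiv s(i, i) (pderiv s(j, j) (monomial m c)) =
    monomial (m - Finsupp.single s(i, j) 1 - Finsupp.single s(i, j) 1)
        (c * ((m s(i, j)) * (m s(i, j) - 1) : ℕ))
      + monomial (m - Finsupp.single s(j, j) 1 - Finsupp.single s(i, i) 1)
        (2 * (c * ((m s(j, j)) * (m s(i, i)) : ℕ))) := by
  classical
  have huw : s(j, j) ≠ s(i, i) := by simp [Sym2.eq_iff, hij.symm]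
  rw [pderiv_monomial, pderiv_monomial, pderiv_monomial, pderiv_monomial]
  have h1 : (m - Finsupp.single s(i, j) 1 : Sym2 (Fin n) →₀ ℕ) s(i, j) = m s(i, j) - 1 := by
    simp [Finsupp.tsub_apply]
  have h2 : (m - Finsupp.single s(j, j) 1 : Sym2 (Fin n) →₀ ℕ) s(i, i) = m s(i, i) := by
    simp [Finsupp.tsub_apply, Finsupp.single_apply, huw]
  rw [h1, h2]
  have h3 : (2 : MvPolynomial (Sym2 (Fin n)) K) = C 2 :=
    (map_ofNat (C : K →+* MvPolynomial (Sym2 (Fin n)) K) 2).symm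
  rw [h3, C_mul_monomial]
  push_cast
  ring_nf

lemma Gzero {K : Type*} [Field K] {n : ℕ} {i j : Fin n} (hij : i ≠ j)
    (σ : Equiv.Perm (Fin n)) (h1 : ¬(σ i = j ∧ σ j = i)) (h2 : ¬(σ i = i ∧ σ j = j)) (c : K) :
    pderiv s(i, j) (pderiv s(i, j) (monomial (mexp σ) c))
      + 2 * pderiv s(i, i) (pderiv s(j, j) (monomial (mexp σ) c)) = 0 := by
  rw [Lmon hij]
  have hv : mexp σ s(i, j) * (mexp σ s(i, j) - 1) = 0 := by
    rw [mexp_apply_offdiag σ hij]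
    by_cases ha : σ i = j <;> by_cases hb : σ j = i <;> simp_all
  have hd : mexp σ s(j, j) * mexp σ s(i, i) = 0 := by
    rw [mexp_apply_diag, mexp_apply_diag]
    by_cases ha : σ i = i <;> by_cases hb : σ j = j <;> simp_all
  rw [hv, hd]
  simp

lemma keyG {K : Type*} [Field K] {n : ℕ} {i j : Fin n} (hij : i ≠ j) (σ : Equiv.Perm (Fin n)) :
    (pderiv s(i, j) (pderiv s(i, j)
        (monomial (mexp σ) (((Equiv.Perm.sign σ : ℤ) : K))))
      + 2 * pderiv s(i, i) (pderiv s(j, j)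
        (monomial (mexp σ) (((Equiv.Perm.sign σ : ℤ) : K)))))
    + (pderiv s(i, j) (pderiv s(i, j)
        (monomial (mexp (σ * Equiv.swap i j)) (((Equiv.Perm.sign (σ * Equiv.swap i j) : ℤ) : K))))
      + 2 * pderiv s(i, i) (pderiv s(j, j)
        (monomial (mexp (σ * Equiv.swap i j)) (((Equiv.Perm.sign (σ * Equiv.swap i j) : ℤ) : K)))))
    = 0 := by
  classical
  set τ := Equiv.swap i j with hτ
  have hsi : (σ * τ) i = σ j := by
    rw [Equiv.Perm.mul_apply, hτ, Equiv.swap_apply_left]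
  have hsj : (σ * τ) j = σ i := by
    rw [Equiv.Perm.mul_apply, hτ, Equiv.swap_apply_right]
  have hsign : ((Equiv.Perm.sign (σ * τ) : ℤ) : K) = -((Equiv.Perm.sign σ : ℤ) : K) := by
    rw [hτ, Equiv.Perm.sign_mul, Equiv.Perm.sign_swap hij]
    push_cast
    ring
  by_cases hA : σ i = j ∧ σ j = i
  · obtain ⟨ha, hb⟩ := hA
    rw [Lmon hij, Lmon hij]
    have v1 : mexp σ s(i, j) = 2 := by
      rw [mexp_apply_offdiag σ hij]; simp [ha, hb]
    have d1 : mexp σ s(i, i) = 0 := by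
      rw [mexp_apply_diag]; simp [ha, Ne.symm hij]
    have d2 : mexp σ s(j, j) = 0 := by
      rw [mexp_apply_diag]; simp [hb, hij]
    have v2 : mexp (σ * τ) s(i, j) = 0 := by
      rw [mexp_apply_offdiag _ hij, hsi, hsj, ha, hb]
      simp [hij, Ne.symm hij]
    have d3 : mexp (σ * τ) s(i, i) = 1 := by
      rw [mexp_apply_diag, hsi, hb]; simp
    have d4 : mexp (σ * τ) s(j, j) = 1 := by
      rw [mexp_apply_diag, hsj, ha]; simp
    have r1 : mexp σ - Finsupp.single s(i, j) 1 - Finsupp.single s(i, j) 1 = mtail σ i j := by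
      rw [mexp_decomp σ hij, ha, hb, show s(j, i) = s(i, j) from Sym2.eq_swap,
        add_tsub_cancel_right, add_tsub_cancel_right]
    have r2 : mexp (σ * τ) - Finsupp.single s(j, j) 1 - Finsupp.single s(i, i) 1
        = mtail σ i j := by
      rw [mexp_decomp (σ * τ) hij, hsi, hsj, ha, hb, mtail_mul_swap,
        add_tsub_cancel_right, add_tsub_cancel_right]
    rw [v1, d1, d2, v2, d3, d4, r1, r2, hsign]
    norm_num
    rw [mul_comm, add_neg_cancel]
  · by_cases hC : σ i = i ∧ σ j = j
    · obtain ⟨ha, hb⟩ := hC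
      rw [Lmon hij, Lmon hij]
      have v1 : mexp σ s(i, j) = 0 := by
        rw [mexp_apply_offdiag σ hij, ha, hb]; simp [hij, Ne.symm hij]
      have d1 : mexp σ s(i, i) = 1 := by rw [mexp_apply_diag, if_pos ha]
      have d2 : mexp σ s(j, j) = 1 := by rw [mexp_apply_diag, if_pos hb]
      have v2 : mexp (σ * τ) s(i, j) = 2 := by
        rw [mexp_apply_offdiag _ hij, hsi, hsj, ha, hb]; simp
      have d3 : mexp (σ * τ) s(i, i) = 0 := by
        rw [mexp_apply_diag, hsi, hb]; simp [Ne.symm hij]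
      have d4 : mexp (σ * τ) s(j, j) = 0 := by
        rw [mexp_apply_diag, hsj, ha]; simp [hij]
      have r1 : mexp σ - Finsupp.single s(j, j) 1 - Finsupp.single s(i, i) 1
          = mtail σ i j := by
        rw [mexp_decomp σ hij, ha, hb, add_tsub_cancel_right, add_tsub_cancel_right]
      have r2 : mexp (σ * τ) - Finsupp.single s(i, j) 1 - Finsupp.single s(i, j) 1
          = mtail σ i j := by
        rw [mexp_decomp (σ * τ) hij, hsi, hsj, ha, hb, mtail_mul_swap,
          show s(j, i) = s(i, j) from Sym2.eq_swap,
          add_tsub_cancel_right, add_tsub_cancel_right]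
      rw [v1, d1, d2, v2, d3, d4, r1, r2, hsign]
      norm_num
      rw [mul_comm, add_neg_cancel]
    · rw [Gzero hij σ hA hC, Gzero hij (σ * τ) ?_ ?_, add_zero]
      · rw [hsi, hsj]
        exact fun h => hC ⟨h.2, h.1⟩
      · rw [hsi, hsj]
        exact fun h => hA ⟨h.2, h.1⟩

lemma det_eq_sum_mono {K : Type*} [Field K] (n : ℕ) :
    (Matrix.of fun a b : Fin n =>
        (X s(a, b) : MvPolynomial (Sym2 (Fin n)) K)).det
      = ∑ σ : Equiv.Perm (Fin n), monomial (mexp σ) (((Equiv.Perm.sign σ : ℤ) : K)) := by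
  rw [Matrix.det_apply]
  refine Finset.sum_congr rfl fun σ _ => ?_
  have hprod : (∏ a : Fin n, (Matrix.of fun a b : Fin n =>
      (X s(a, b) : MvPolynomial (Sym2 (Fin n)) K)) (σ a) a)
      = monomial (mexp σ) (1 : K) := by
    rw [mexp, monomial_sum_one]
    rfl
  rw [hprod, Units.smul_def, zsmul_eq_mul,
    ← map_intCast (C : K →+* MvPolynomial (Sym2 (Fin n)) K), C_mul_monomial, mul_one]

theorem diag_permanent_annihilates_det {K : Type*} [Field K] [CharZero K]
    (n : ℕ) (i j : Fin n) (hij : i < j) :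
    pderiv s(i, j) (pderiv s(i, j)
        ((Matrix.of fun a b : Fin n =>
          (X s(a, b) : MvPolynomial (Sym2 (Fin n)) K)).det))
      + 2 * pderiv s(i, i) (pderiv s(j, j)
        ((Matrix.of fun a b : Fin n =>
          (X s(a, b) : MvPolynomial (Sym2 (Fin n)) K)).det)) = 0 := by
  have hne : i ≠ j := Fin.ne_of_lt hij
  rw [det_eq_sum_mono, map_sum, map_sum, map_sum, map_sum, Finset.mul_sum,
    ← Finset.sum_add_distrib]
  refine Finset.sum_ninvolution (fun σ => σ * Equiv.swap i j)
    (fun σ => keyG hne σ) (fun σ _ => ?_) (fun σ => Finset.mem_univ _) (fun σ => ?_)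
  · intro h
    have h1 : σ * Equiv.swap i j = σ * 1 := by rw [mul_one]; exact h
    have h2 : Equiv.swap i j = 1 := mul_left_cancel h1
    exact hne.symm (by simpa using congrArg (fun e => e i) h2)
  · show σ * Equiv.swap i j * Equiv.swap i j = σ
    rw [mul_assoc, Equiv.swap_mul_self, mul_one]
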